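/- Let I be a BinCSP instance with Gaifman graph G, and let W ⊆ V(G) be a vertex cover of G with |W| = k. Over the Boolean variable set X = {x_{w,c} : w ∈ W, c ∈ D(w)}, define F¹ = ⋀_{w∈W} ⋁_{c∈D(w)} x_{w,c}; F² = ⋀_{w₁,w₂∈W, w₁w₂∈E(G)} ⋁_{(c,c′)∈C(w₁,w₂)} (x_{w₁,c} ∧ x_{w₂,c′}); and F⁴ = ⋀_{v∈V(G)∖W} ⋁_{c∈D(v)} ⋀_{w∈W, vw∈E(G)} ⋀_{c′∈D(w), (c,c′)∉C(v,w)} ¬x_{w,c′}. Then the formula F = F¹ ∧ F² ∧ F⁴ has a satisfying truth assignment of weight exactly k if and only if I is satisfiable. -/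
import Mathlib


/-- correctness of the W[3]-membership formula for BinCSP parameterized by
vertex cover. Given a BinCSP instance with Gaifman graph `G`, domains `D`, constraints `C`
(with the symmetry convention and `C u v ⊆ D u × D v`), and a vertex cover `W` of size `k`,
the formula `F = F¹ ∧ F² ∧ F⁴` over the variables `x_{w,c}` (`w ∈ W`, `c ∈ D w`),
modelled by a predicate `τ`, has a satisfying assignment of weight exactly `k` if and only
if the instance is satisfiable. -/
theorem stmt6 {V A : Type} [Fintype V] (G : SimpleGraph V)
    (D : V → Finset A) (C : V → V → Set (A × A))
    (hsym : ∀ u v : V, ∀ a b : A, (a, b) ∈ C u v ↔ (b, a) ∈ C v u)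
    (hdom : ∀ u v : V, ∀ a b : A, (a, b) ∈ C u v → a ∈ D u ∧ b ∈ D v)
    (W : Finset V) (k : ℕ) (hWk : W.card = k)
    (hvc : ∀ u v : V, G.Adj u v → u ∈ W ∨ v ∈ W) :
    (∃ τ : V → A → Prop,
        -- weight exactly `k` over the variable set `X = {x_{w,c} : w ∈ W, c ∈ D w}`
        Nat.card {p : V × A // p.1 ∈ W ∧ p.2 ∈ D p.1 ∧ τ p.1 p.2} = k ∧
        -- F¹ : every vertex of `W` gets at least one value
        (∀ w ∈ W, ∃ c ∈ D w, τ w c) ∧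
        -- F² : no conflict between vertices of `W`
        (∀ w₁ ∈ W, ∀ w₂ ∈ W, G.Adj w₁ w₂ →
          ∃ c ∈ D w₁, ∃ c' ∈ D w₂, (c, c') ∈ C w₁ w₂ ∧ τ w₁ c ∧ τ w₂ c') ∧
        -- F⁴ (using F³) : every vertex outside `W` can choose a conflict-free value
        (∀ v : V, v ∉ W → ∃ c ∈ D v,
          ∀ w ∈ W, G.Adj v w → ∀ c' ∈ D w, (c, c') ∉ C v w → ¬ τ w c')) ↔
    (∃ η : V → A, (∀ v, η v ∈ D v) ∧ ∀ u v, G.Adj u v → (η u, η v) ∈ C u v) := by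
  classical
  constructor
  · rintro ⟨τ, hcard, h1, h2, h4⟩
    choose cW hcW1 hcW2 using h1
    choose cO hcO1 hcO2 using h4
    -- finiteness of the weight set
    set S := {p : V × A // p.1 ∈ W ∧ p.2 ∈ D p.1 ∧ τ p.1 p.2} with hS
    have hfin : Finite S := by
      rcases Nat.eq_zero_or_pos k with hk | hk
      · have hW : W = ∅ := Finset.card_eq_zero.mp (hWk.trans hk)
        have : IsEmpty S := ⟨fun p => by
          have := p.2.1; simp [hW] at this⟩
        exact Finite.of_subsingleton
      · exact Nat.finite_of_card_ne_zero (by rw [hcard]; omega)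
    have hπ : Function.Bijective (fun p : S => (⟨p.1.1, p.2.1⟩ : {w : V // w ∈ W})) := by
      rw [Nat.bijective_iff_surjective_and_card]
      constructor
      · rintro ⟨w, hw⟩
        exact ⟨⟨(w, cW w hw), hw, hcW1 w hw, hcW2 w hw⟩, rfl⟩
      · rw [hcard, Nat.card_eq_fintype_card, Fintype.card_coe, hWk]
    have huniq : ∀ w ∈ W, ∀ c c' : A, c ∈ D w → c' ∈ D w → τ w c → τ w c' → c = c' := by
      intro w hw c c' hc hc' ht ht'
      have := hπ.1 (a₁ := ⟨(w, c), hw, hc, ht⟩) (a₂ := ⟨(w, c'), hw, hc', ht'⟩) rfl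
      exact congrArg (fun p : S => p.1.2) this
    refine ⟨fun v => if h : v ∈ W then cW v h else cO v h, fun v => ?_, fun u v huv => ?_⟩
    · by_cases h : v ∈ W
      · simp only [dif_pos h]; exact hcW1 v h
      · simp only [dif_neg h]; exact hcO1 v h
    · by_cases hu : u ∈ W <;> by_cases hv : v ∈ W
      · simp only [dif_pos hu, dif_pos hv]
        obtain ⟨c, hc, c', hc', hcc', htc, htc'⟩ := h2 u hu v hv huv
        rwa [huniq u hu c (cW u hu) hc (hcW1 u hu) htc (hcW2 u hu),
          huniq v hv c' (cW v hv) hc' (hcW1 v hv) htc' (hcW2 v hv)] at hcc'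
      · simp only [dif_pos hu, dif_neg hv]
        by_contra hcon
        exact hcO2 v hv u hu huv.symm (cW u hu) (hcW1 u hu)
          (fun hmem => hcon ((hsym u v _ _).mpr hmem)) (hcW2 u hu)
      · simp only [dif_neg hu, dif_pos hv]
        by_contra hcon
        exact hcO2 u hu v hv huv (cW v hv) (hcW1 v hv)
          (fun hmem => hcon hmem) (hcW2 v hv)
      · cases hvc u v huv with
        | inl h => exact absurd h hu
        | inr h => exact absurd h hv
  · rintro ⟨η, hηD, hηC⟩
    refine ⟨fun w c => c = η w, ?_, fun w hw => ⟨η w, hηD w, rfl⟩,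
      fun w₁ h₁ w₂ h₂ hadj => ⟨η w₁, hηD w₁, η w₂, hηD w₂, hηC w₁ w₂ hadj, rfl, rfl⟩,
      fun v hv => ⟨η v, hηD v, fun w hw hadj c' hc' hnc hc'eq => ?_⟩⟩
    · have e : {p : V × A // p.1 ∈ W ∧ p.2 ∈ D p.1 ∧ p.2 = η p.1} ≃ {w : V // w ∈ W} :=
        { toFun := fun p => ⟨p.1.1, p.2.1⟩
          invFun := fun w => ⟨(w.1, η w.1), w.2, hηD w.1, rfl⟩
          left_inv := fun p => by
            ext
            · rfl
            · exact p.2.2.2.symm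
          right_inv := fun w => rfl }
      rw [Nat.card_congr e, Nat.card_eq_fintype_card, Fintype.card_coe, hWk]
    · exact hnc (hc'eq ▸ hηC v w hadj)
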